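/- Let R be a Dedekind domain with finite class group and x a nonzero nonunit. If x = α₁⋯α_k is a product of k irreducibles, then every factorization of x into irreducibles has at most k·D(G) factors, where D(G) is the Davenport constant of the class group G. In particular every length set L(x) is finite. -/

import Mathlib

open UniqueFactorizationMonoid

/-- The Davenport constant of a commutative group `G`: the supremum of lengths of
minimal zero-(product-one-)sequences over `G`. -/
noncomputable def davenportConstant (G : Type*) [CommGroup G] : ℕ :=
  sSup {n : ℕ | ∃ g : Fin n → G, ∏ i, g i = 1 ∧
    ∀ S : Finset (Fin n), S.Nonempty → S ≠ Finset.univ → ∏ i ∈ S, g i ≠ 1}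

/-- The set of lengths of factorizations of `x` into irreducibles. -/
def lengthSet {R : Type*} [CommMonoidWithZero R] (x : R) : Set ℕ :=
  {k : ℕ | ∃ α : Fin k → R, (∀ i, Irreducible (α i)) ∧ x = ∏ i, α i}

section Davenport

variable {G : Type*} [CommGroup G] [Finite G]

lemma davenport_set_bdd :
    {n : ℕ | ∃ g : Fin n → G, ∏ i, g i = 1 ∧
      ∀ S : Finset (Fin n), S.Nonempty → S ≠ Finset.univ → ∏ i ∈ S, g i ≠ 1}
      ⊆ Set.Iic (Nat.card G) := by
  classical
  intro n hn
  obtain ⟨g, hg1, hmin⟩ := hn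
  by_contra hlt
  simp only [Set.mem_Iic, not_le] at hlt
  have : Fintype G := Fintype.ofFinite G
  have hcard : Fintype.card G < Fintype.card (Fin n) := by
    simpa [Nat.card_eq_fintype_card] using hlt
  set p : Fin n → G := fun j => ∏ i ∈ Finset.Iio j, g i with hp
  obtain ⟨a, b, hab, hpab⟩ := Fintype.exists_ne_map_eq_of_card_lt p hcard
  -- wlog a < b
  have key : ∀ a b : Fin n, a < b → p a = p b → False := by
    intro a b h hpe
    have hdisj : Disjoint (Finset.Iio a) (Finset.Ico a b) := by
      rw [Finset.disjoint_left]
      intro x hx hx2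
      simp only [Finset.mem_Iio, Finset.mem_Ico] at hx hx2
      exact absurd hx2.1 (not_le.2 hx)
    have hun : Finset.Iio a ∪ Finset.Ico a b = Finset.Iio b := by
      ext x
      simp only [Finset.mem_union, Finset.mem_Iio, Finset.mem_Ico, Fin.lt_def, Fin.le_def]
      omega
    have hsplit : p a * ∏ i ∈ Finset.Ico a b, g i = p b := by
      rw [hp]; rw [← Finset.prod_union hdisj, hun]
    have hS1 : ∏ i ∈ Finset.Ico a b, g i = 1 := by
      have := hsplit.trans hpe.symm
      exact mul_left_cancel (a := p a) (by rw [this, mul_one])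
    refine hmin (Finset.Ico a b) (Finset.nonempty_Ico.2 h) ?_ hS1
    intro hU
    have : b ∈ Finset.Ico a b := hU ▸ Finset.mem_univ b
    simp at this
  rcases hab.lt_or_gt with h | h
  · exact key a b h hpab
  · exact key b a h hpab.symm

lemma le_davenport {n : ℕ} (g : Fin n → G) (hg1 : ∏ i, g i = 1)
    (hmin : ∀ S : Finset (Fin n), S.Nonempty → S ≠ Finset.univ → ∏ i ∈ S, g i ≠ 1) :
    n ≤ davenportConstant G :=
  le_csSup ⟨Nat.card G, fun _ hm => davenport_set_bdd hm⟩ ⟨g, hg1, hmin⟩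

end Davenport

section Dedekind

variable {R : Type*} [CommRing R] [IsDomain R] [IsDedekindDomain R] [Finite (ClassGroup R)]

lemma card_nf_span_irreducible {a : R} (ha : Irreducible a) :
    (normalizedFactors (Ideal.span {a})).card ≤ davenportConstant (ClassGroup R) := by
  classical
  set I : Ideal R := Ideal.span {a} with hI
  have hI0 : I ≠ 0 := by
    simpa [hI, Ideal.span_singleton_eq_bot] using ha.ne_zero
  set n := (normalizedFactors I).card with hn
  set L := (normalizedFactors I).toList with hL
  have hlen : L.length = n := by simp [hL, hn]
  set F : Fin n → Ideal R := fun i => L.get (Fin.cast hlen.symm i) with hF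
  have hFmem : ∀ i, F i ∈ normalizedFactors I := by
    intro i
    rw [← Multiset.mem_toList]
    exact List.get_mem _ _
  have hFprime : ∀ i, Prime (F i) := fun i => prime_of_normalized_factor _ (hFmem i)
  have hFnz : ∀ i, F i ∈ nonZeroDivisors (Ideal R) := fun i =>
    mem_nonZeroDivisors_iff_ne_zero.2 (hFprime i).ne_zero
  have hprodF : ∏ i, F i = I := by
    have h1 : ∏ i, F i = L.prod := by
      rw [← Fin.prod_univ_getElem L]
      exact Fintype.prod_equiv (finCongr hlen.symm) F (fun j => L[j.1]) (fun i => rfl)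
    rw [h1, Multiset.prod_toList]
    exact associated_iff_eq.1 (prod_normalizedFactors hI0)
  have hprodnz : ∀ S : Finset (Fin n), (∏ i ∈ S, F i) ∈ nonZeroDivisors (Ideal R) := fun S =>
    mem_nonZeroDivisors_iff_ne_zero.2 (Finset.prod_ne_zero_iff.2 fun i _ => (hFprime i).ne_zero)
  set g : Fin n → ClassGroup R := fun i => ClassGroup.mk0 ⟨F i, hFnz i⟩ with hg
  have hcoe : ∀ S : Finset (Fin n), ∏ i ∈ S, g i
      = ClassGroup.mk0 ⟨∏ i ∈ S, F i, hprodnz S⟩ := by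
    intro S
    rw [hg, ← map_prod]
    congr 1
    ext
    simp
  have hg1 : ∏ i, g i = 1 := by
    rw [hcoe Finset.univ]
    rw [ClassGroup.mk0_eq_one_iff]
    refine ⟨⟨a, ?_⟩⟩
    rw [hprodF]
  by_contra hgt
  push_neg at hgt
  have hnot : ¬ (n ∈ {m : ℕ | ∃ g : Fin m → ClassGroup R, ∏ i, g i = 1 ∧
      ∀ S : Finset (Fin m), S.Nonempty → S ≠ Finset.univ → ∏ i ∈ S, g i ≠ 1}) := by
    intro hmem
    exact absurd (le_csSup ⟨Nat.card (ClassGroup R), fun _ hm => davenport_set_bdd hm⟩ hmem)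
      (not_le.2 hgt)
  simp only [Set.mem_setOf_eq, not_exists, not_and, not_forall] at hnot
  obtain ⟨S, hSne, hSuniv, hSprod⟩ := hnot g hg1
  rw [not_not] at hSprod
  -- S and its complement give principal ideals
  have hScprod : ∏ i ∈ Sᶜ, g i = 1 := by
    have := Finset.prod_mul_prod_compl S g
    rw [hSprod, one_mul, hg1] at this
    exact this
  have hJ : Submodule.IsPrincipal (∏ i ∈ S, F i) := by
    have := hcoe S ▸ hSprod
    exact (ClassGroup.mk0_eq_one_iff _).1 this
  have hJ' : Submodule.IsPrincipal (∏ i ∈ Sᶜ, F i) := by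
    have := hcoe Sᶜ ▸ hScprod
    exact (ClassGroup.mk0_eq_one_iff _).1 this
  obtain ⟨b, hb⟩ := hJ
  obtain ⟨c, hc⟩ := hJ'
  have hbc : Ideal.span {a} = Ideal.span {b * c} := by
    rw [← Ideal.span_singleton_mul_span_singleton]
    show I = _
    rw [← hprodF, ← Finset.prod_mul_prod_compl S F, hb, hc]
  have hassoc : Associated a (b * c) := Ideal.span_singleton_eq_span_singleton.1 hbc
  have hirr : Irreducible (b * c) := hassoc.irreducible ha
  have hnotunit : ∀ (T : Finset (Fin n)) (d : R), T.Nonempty →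
      (∏ i ∈ T, F i) = Ideal.span {d} → ¬ IsUnit d := by
    intro T d hT hTd hd
    obtain ⟨i₀, hi₀⟩ := hT
    have hdvd : F i₀ ∣ ∏ i ∈ T, F i := Finset.dvd_prod_of_mem F hi₀
    have : IsUnit (∏ i ∈ T, F i) := by
      rw [hTd, Ideal.isUnit_iff, Ideal.span_singleton_eq_top]
      exact hd
    exact (hFprime i₀).not_unit (isUnit_of_dvd_unit hdvd this)
  have hScne : Sᶜ.Nonempty := by
    rw [Finset.nonempty_iff_ne_empty]
    intro h
    exact hSuniv (by simpa [Finset.compl_eq_empty_iff] using h)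
  have hbspan : (∏ i ∈ S, F i) = Ideal.span {b} := by rw [hb]
  have hcspan : (∏ i ∈ Sᶜ, F i) = Ideal.span {c} := by rw [hc]
  rcases hirr.isUnit_or_isUnit rfl with h | h
  · exact hnotunit S b hSne hbspan h
  · exact hnotunit Sᶜ c hScne hcspan h

lemma card_nf_span_prod {m : ℕ} (β : Fin m → R) (hβ : ∀ j, β j ≠ 0) :
    (normalizedFactors (Ideal.span {∏ j, β j})).card
      = ∑ j, (normalizedFactors (Ideal.span {β j})).card := by
  classical
  have : ∀ s : Finset (Fin m), (normalizedFactors (Ideal.span {∏ j ∈ s, β j})).card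
      = ∑ j ∈ s, (normalizedFactors (Ideal.span {β j})).card := by
    intro s
    induction s using Finset.cons_induction with
    | empty => simp [Ideal.span_singleton_one, ← Ideal.one_eq_top, normalizedFactors_one]
    | cons a s has ih =>
      rw [Finset.prod_cons, ← Ideal.span_singleton_mul_span_singleton,
        normalizedFactors_mul, Multiset.card_add, ih, Finset.sum_cons]
      · simpa [Ideal.span_singleton_eq_bot] using hβ a
      · simpa [Ideal.span_singleton_eq_bot] using Finset.prod_ne_zero_iff.2 fun j _ => hβ j
  exact this Finset.univ

lemma one_le_card_nf {b : R} (hb0 : b ≠ 0) (hbu : ¬ IsUnit b) :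
    1 ≤ (normalizedFactors (Ideal.span {b})).card := by
  rw [Nat.one_le_iff_ne_zero]
  intro h
  have hz : normalizedFactors (Ideal.span {b}) = 0 := Multiset.card_eq_zero.1 h
  have hI0 : Ideal.span {b} ≠ (0 : Ideal R) := by
    simpa [Ideal.span_singleton_eq_bot] using hb0
  have hass := prod_normalizedFactors hI0
  rw [hz, Multiset.prod_zero] at hass
  have heq : (1 : Ideal R) = Ideal.span {b} := associated_iff_eq.1 hass
  refine hbu (Ideal.span_singleton_eq_top.1 ?_)
  rw [← heq, Ideal.one_eq_top]

end Dedekind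

theorem lengths_bounded_by_davenport
    {R : Type*} [CommRing R] [IsDomain R] [IsDedekindDomain R]
    [Finite (ClassGroup R)]
    (x : R) (hx0 : x ≠ 0) (hxu : ¬IsUnit x)
    (k : ℕ) (α : Fin k → R) (hα : ∀ i, Irreducible (α i)) (hfac : x = ∏ i, α i) :
    (∀ (m : ℕ) (β : Fin m → R), (∀ j, Irreducible (β j)) → x = ∏ j, β j →
        m ≤ k * davenportConstant (ClassGroup R)) ∧
      (lengthSet x).Finite := by
  have main : ∀ (m : ℕ) (β : Fin m → R), (∀ j, Irreducible (β j)) → x = ∏ j, β j →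
      m ≤ k * davenportConstant (ClassGroup R) := by
    intro m β hβ hxβ
    have hΩx : (normalizedFactors (Ideal.span {x})).card ≤ k * davenportConstant (ClassGroup R) := by
      rw [hfac, card_nf_span_prod α (fun i => (hα i).ne_zero)]
      calc ∑ i, (normalizedFactors (Ideal.span {α i})).card
          ≤ ∑ _i : Fin k, davenportConstant (ClassGroup R) :=
            Finset.sum_le_sum fun i _ => card_nf_span_irreducible (hα i)
        _ = k * davenportConstant (ClassGroup R) := by simp [mul_comm]
    have hm : m ≤ (normalizedFactors (Ideal.span {x})).card := by
      rw [hxβ, card_nf_span_prod β (fun j => (hβ j).ne_zero)]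
      calc m = ∑ _j : Fin m, 1 := by simp
        _ ≤ ∑ j, (normalizedFactors (Ideal.span {β j})).card :=
            Finset.sum_le_sum fun j _ => one_le_card_nf (hβ j).ne_zero (hβ j).not_isUnit
    exact hm.trans hΩx
  refine ⟨main, ?_⟩
  refine Set.Finite.subset (Set.finite_Iic (k * davenportConstant (ClassGroup R))) ?_
  rintro m ⟨β, hβ, hxβ⟩
  exact main m β hβ hxβ
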